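/- Let h and g be analytic functions on the unit disk 𝔻 with h(0) = 0 and g(0) = 0, and suppose the harmonic mapping f(z) = h(z) + conj(g(z)) satisfies |f(z)| < 1 for all z ∈ 𝔻. Then for every z ∈ 𝔻, |h(z)| + |g(z)| ≤ (2/π) · log((1 + |z|)/(1 − |z|)). -/

import Mathlib

open Complex Metric

lemma norm_log_ratio_le {ζ : ℂ} (hz : ‖ζ‖ < 1) :
    ‖log (1 + ζ) - log (1 - ζ)‖ ≤ Real.log (1 + ‖ζ‖) - Real.log (1 - ‖ζ‖) := by
  have hr0 : (0:ℝ) ≤ ‖ζ‖ := norm_nonneg _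
  have hA : HasSum (fun n : ℕ => (-1) ^ (n + 1) * ζ ^ n / n + ζ ^ n / n)
      (log (1 + ζ) - log (1 - ζ)) := by
    have := (Complex.hasSum_taylorSeries_log hz).add (Complex.hasSum_taylorSeries_neg_log hz)
    simpa [sub_eq_add_neg] using this
  have hrc : ‖((‖ζ‖ : ℝ) : ℂ)‖ < 1 := by rw [Complex.norm_real]; rwa [Real.norm_of_nonneg hr0]
  have hBc : HasSum (fun n : ℕ => (-1 : ℂ) ^ (n + 1) * (‖ζ‖ : ℂ) ^ n / n + (‖ζ‖ : ℂ) ^ n / n)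
      (log (1 + (‖ζ‖ : ℂ)) - log (1 - (‖ζ‖ : ℂ))) := by
    have := (Complex.hasSum_taylorSeries_log hrc).add (Complex.hasSum_taylorSeries_neg_log hrc)
    simpa [sub_eq_add_neg] using this
  have hB : HasSum (fun n : ℕ => (-1 : ℝ) ^ (n + 1) * ‖ζ‖ ^ n / n + ‖ζ‖ ^ n / n)
      (Real.log (1 + ‖ζ‖) - Real.log (1 - ‖ζ‖)) := by
    rw [← Complex.hasSum_ofReal]
    convert hBc using 2 with n
    · push_cast; ring
    · rw [show (1 + (‖ζ‖ : ℂ)) = ((1 + ‖ζ‖ : ℝ) : ℂ) by push_cast; ring,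
        show (1 - (‖ζ‖ : ℂ)) = ((1 - ‖ζ‖ : ℝ) : ℂ) by push_cast; ring,
        ← Complex.ofReal_log (by linarith), ← Complex.ofReal_log (by linarith)]
      push_cast; ring
  have hterm : ∀ n : ℕ, ‖(-1 : ℂ) ^ (n + 1) * ζ ^ n / n + ζ ^ n / n‖
      ≤ (-1 : ℝ) ^ (n + 1) * ‖ζ‖ ^ n / n + ‖ζ‖ ^ n / n := by
    intro n
    rcases Nat.even_or_odd n with he | ho
    · rw [Odd.neg_one_pow he.add_one, Odd.neg_one_pow he.add_one]
      have h1 : (-1:ℂ) * ζ ^ n / n + ζ ^ n / n = 0 := by ring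
      have h2 : (-1:ℝ) * ‖ζ‖ ^ n / n + ‖ζ‖ ^ n / n = 0 := by ring
      rw [h1, h2]; simp
    · rw [Even.neg_one_pow ho.add_one, Even.neg_one_pow ho.add_one]
      have hn : ‖ζ ^ n / n‖ = ‖ζ‖ ^ n / n := by
        simp [norm_div, norm_pow]
      calc ‖1 * ζ ^ n / n + ζ ^ n / n‖ ≤ ‖1 * ζ ^ n / n‖ + ‖ζ ^ n / n‖ := norm_add_le _ _
        _ = 1 * ‖ζ‖ ^ n / n + ‖ζ‖ ^ n / n := by simp [hn]
  have hsA : Summable (fun n : ℕ => ‖(-1 : ℂ) ^ (n + 1) * ζ ^ n / n + ζ ^ n / n‖) :=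
    Summable.of_nonneg_of_le (fun n => norm_nonneg _) hterm hB.summable
  rw [← hA.tsum_eq, ← hB.tsum_eq]
  exact (norm_tsum_le_tsum_norm hsA).trans (Summable.tsum_le_tsum hterm hsA hB.summable)

lemma log_ratio_split {ζ : ℂ} (hz : ‖ζ‖ < 1) :
    log ((1 + ζ) / (1 - ζ)) = log (1 + ζ) - log (1 - ζ) := by
  have hre1 : 0 < (1 + ζ).re := by
    have := Complex.abs_re_le_norm ζ
    simp only [add_re, one_re]
    cases' abs_le.mp this with h1 h2
    linarith
  have hre2 : 0 < (1 - ζ).re := by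
    have := Complex.abs_re_le_norm ζ
    simp only [sub_re, one_re]
    cases' abs_le.mp this with h1 h2
    linarith
  have h1 : (1 + ζ) ≠ 0 := fun h => by simp [h] at hre1
  have h2 : (1 - ζ) ≠ 0 := fun h => by simp [h] at hre2
  have ha1 : |(1 + ζ).arg| < Real.pi / 2 := abs_arg_lt_pi_div_two_iff.mpr (Or.inl hre1)
  have ha2 : |(1 - ζ).arg| < Real.pi / 2 := abs_arg_lt_pi_div_two_iff.mpr (Or.inl hre2)
  have hpi : 0 < Real.pi := Real.pi_pos
  have ha2' : (1 - ζ).arg ≠ Real.pi := by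
    intro h; rw [h] at ha2; rw [abs_of_pos hpi] at ha2; linarith
  have hainv : ((1 - ζ)⁻¹).arg = -(1 - ζ).arg := by
    rw [arg_inv]; simp [ha2']
  rw [div_eq_mul_inv, Complex.log_mul h1 (inv_ne_zero h2), Complex.log_inv _ ha2']
  · ring
  · rw [hainv]
    constructor
    · cases' abs_lt.mp ha1 with u1 u2
      cases' abs_lt.mp ha2 with v1 v2
      linarith
    · cases' abs_lt.mp ha1 with u1 u2
      cases' abs_lt.mp ha2 with v1 v2
      linarith

-- facts about the strip map
lemma strip_facts {w : ℂ} (hw : |w.re| < 1) :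
    0 < (exp ((Real.pi / 2 : ℝ) * I * w)).re ∧
    exp ((Real.pi / 2 : ℝ) * I * w) + 1 ≠ 0 ∧
    ‖(exp ((Real.pi / 2 : ℝ) * I * w) - 1) / (exp ((Real.pi / 2 : ℝ) * I * w) + 1)‖ < 1 := by
  have hpi : 0 < Real.pi := Real.pi_pos
  set E := exp ((Real.pi / 2 : ℝ) * I * w) with hE
  have him : ((Real.pi / 2 : ℝ) * I * w).im = Real.pi / 2 * w.re := by
    simp [Complex.mul_im, Complex.mul_re]
  have hcos : 0 < Real.cos (Real.pi / 2 * w.re) := by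
    apply Real.cos_pos_of_mem_Ioo
    constructor
    · have := abs_lt.mp hw
      nlinarith [this.1]
    · have := abs_lt.mp hw
      nlinarith [this.2]
  have hre : 0 < E.re := by
    rw [hE, Complex.exp_re, him]
    positivity
  refine ⟨hre, ?_, ?_⟩
  · intro h
    have : (E + 1).re = 0 := by rw [h]; simp
    simp only [add_re, one_re] at this
    linarith
  · have hden : E + 1 ≠ 0 := by
      intro h
      have : (E + 1).re = 0 := by rw [h]; simp
      simp only [add_re, one_re] at this
      linarith
    rw [norm_div, div_lt_one (norm_pos_iff.mpr hden)]
    have hlt : ‖E - 1‖ ^ 2 < ‖E + 1‖ ^ 2 := by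
      simp only [Complex.sq_norm, Complex.normSq_apply, sub_re, sub_im,
        add_re, add_im, one_re, one_im]
      nlinarith
    exact lt_of_pow_lt_pow_left₀ 2 (norm_nonneg _) hlt

lemma strip_inverse {w : ℂ} (hw : |w.re| < 1) :
    log ((1 + (exp ((Real.pi / 2 : ℝ) * I * w) - 1) / (exp ((Real.pi / 2 : ℝ) * I * w) + 1)) /
        (1 - (exp ((Real.pi / 2 : ℝ) * I * w) - 1) / (exp ((Real.pi / 2 : ℝ) * I * w) + 1)))
      = (Real.pi / 2 : ℝ) * I * w := by
  obtain ⟨hre, hden, -⟩ := strip_facts hw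
  set E := exp ((Real.pi / 2 : ℝ) * I * w) with hE
  have h1 : 1 + (E - 1) / (E + 1) = 2 * E / (E + 1) := by field_simp; ring
  have h2 : 1 - (E - 1) / (E + 1) = 2 / (E + 1) := by field_simp; ring
  have hratio : (1 + (E - 1) / (E + 1)) / (1 - (E - 1) / (E + 1)) = E := by
    rw [h1, h2]
    rw [div_div_div_eq]
    field_simp
  rw [hratio, hE]
  apply Complex.log_exp
  · have him : ((Real.pi / 2 : ℝ) * I * w).im = Real.pi / 2 * w.re := by
      simp [Complex.mul_im, Complex.mul_re]
    rw [him]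
    have := (abs_lt.mp hw).1
    nlinarith [Real.pi_pos]
  · have him : ((Real.pi / 2 : ℝ) * I * w).im = Real.pi / 2 * w.re := by
      simp [Complex.mul_im, Complex.mul_re]
    rw [him]
    have := (abs_lt.mp hw).2
    nlinarith [Real.pi_pos]

lemma strip_bound (F : ℂ → ℂ) (hF : DifferentiableOn ℂ F (ball 0 1)) (hF0 : F 0 = 0)
    (hre : ∀ w ∈ ball (0 : ℂ) 1, |(F w).re| < 1) {z : ℂ} (hz : ‖z‖ < 1) :
    ‖F z‖ ≤ (2 / Real.pi) * Real.log ((1 + ‖z‖) / (1 - ‖z‖)) := by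
  have hpi : 0 < Real.pi := Real.pi_pos
  set G : ℂ → ℂ := fun w =>
    (exp ((Real.pi / 2 : ℝ) * I * F w) - 1) / (exp ((Real.pi / 2 : ℝ) * I * F w) + 1) with hG
  have hzball : z ∈ ball (0 : ℂ) 1 := mem_ball_zero_iff.mpr hz
  have hGdiff : DifferentiableOn ℂ G (ball 0 1) := by
    apply DifferentiableOn.div
    · exact (((hF.const_mul _).cexp)).sub_const 1
    · exact (((hF.const_mul _).cexp)).add_const 1
    · intro w hw
      exact (strip_facts (hre w hw)).2.1
  have hG0 : G 0 = 0 := by simp [hG, hF0]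
  have hmaps : Set.MapsTo G (ball 0 1) (ball 0 1) := by
    intro w hw
    rw [mem_ball_zero_iff]
    exact (strip_facts (hre w hw)).2.2
  have hSchwarz : ‖G z‖ ≤ ‖z‖ := by
    have := Complex.norm_le_norm_of_mapsTo_ball hGdiff (hmaps.mono_right ball_subset_closedBall) hG0 hz
    simpa using this
  have hGz : ‖G z‖ < 1 := lt_of_le_of_lt hSchwarz hz
  have hkey : (Real.pi / 2 : ℝ) * I * F z = log ((1 + G z) / (1 - G z)) :=
    (strip_inverse (hre z hzball)).symm
  have hnorm : Real.pi / 2 * ‖F z‖ = ‖log ((1 + G z) / (1 - G z))‖ := by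
    rw [← hkey, norm_mul, norm_mul, Complex.norm_real, Complex.norm_I,
      Real.norm_of_nonneg (by positivity), mul_one]
  have hb1 : ‖log ((1 + G z) / (1 - G z))‖ ≤ Real.log (1 + ‖G z‖) - Real.log (1 - ‖G z‖) := by
    rw [log_ratio_split hGz]
    exact norm_log_ratio_le hGz
  have hb2 : Real.log (1 + ‖G z‖) - Real.log (1 - ‖G z‖)
      ≤ Real.log (1 + ‖z‖) - Real.log (1 - ‖z‖) := by
    have g0 : (0:ℝ) ≤ ‖G z‖ := norm_nonneg _
    have l1 : Real.log (1 + ‖G z‖) ≤ Real.log (1 + ‖z‖) :=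
      Real.log_le_log (by linarith) (by linarith)
    have l2 : Real.log (1 - ‖z‖) ≤ Real.log (1 - ‖G z‖) :=
      Real.log_le_log (by linarith) (by linarith)
    linarith
  have hlogdiv : Real.log ((1 + ‖z‖) / (1 - ‖z‖)) = Real.log (1 + ‖z‖) - Real.log (1 - ‖z‖) :=
    Real.log_div (by positivity) (by linarith)
  rw [hlogdiv]
  have : Real.pi / 2 * ‖F z‖ ≤ Real.log (1 + ‖z‖) - Real.log (1 - ‖z‖) := by
    rw [hnorm]; exact le_trans hb1 hb2
  rw [show (2 / Real.pi) * (Real.log (1 + ‖z‖) - Real.log (1 - ‖z‖))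
      = (2 / Real.pi) * (Real.log (1 + ‖z‖) - Real.log (1 - ‖z‖)) from rfl]
  calc ‖F z‖ = (2 / Real.pi) * (Real.pi / 2 * ‖F z‖) := by field_simp
    _ ≤ (2 / Real.pi) * (Real.log (1 + ‖z‖) - Real.log (1 - ‖z‖)) := by
        apply mul_le_mul_of_nonneg_left this (by positivity)

open Metric in
/-- If `f = h + conj g` is a harmonic mapping of the unit disk with `h(0) = g(0) = 0`
and `|f| < 1` on the disk, then `|h(z)| + |g(z)| ≤ (2/π) log((1+|z|)/(1−|z|))`. -/
theorem harmonic_schwarz_log_bound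
    (h g : ℂ → ℂ)
    (hh : AnalyticOnNhd ℂ h (ball (0 : ℂ) 1))
    (hg : AnalyticOnNhd ℂ g (ball (0 : ℂ) 1))
    (hh0 : h 0 = 0) (hg0 : g 0 = 0)
    (hbound : ∀ z : ℂ, ‖z‖ < 1 → ‖h z + (starRingEnd ℂ) (g z)‖ < 1) :
    ∀ z : ℂ, ‖z‖ < 1 →
      ‖h z‖ + ‖g z‖ ≤ (2 / Real.pi) * Real.log ((1 + ‖z‖) / (1 - ‖z‖)) := by
  intro z hz
  set a := h z with ha
  set b := g z with hb
  set μ : ℂ := if a = 0 ∨ b = 0 then 1 else (b / (‖b‖ : ℂ)) * ((‖a‖ : ℂ) / a) with hμ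
  have hμ0 : μ ≠ 0 := by
    rw [hμ]
    split_ifs with hc
    · exact one_ne_zero
    · push_neg at hc
      apply mul_ne_zero
      · exact div_ne_zero hc.2 (by simpa using norm_ne_zero_iff.mpr hc.2)
      · exact div_ne_zero (by simpa using norm_ne_zero_iff.mpr hc.1) hc.1
  have hμabs : ‖μ‖ = 1 := by
    rw [hμ]
    split_ifs with hc
    · simp
    · push_neg at hc
      have han : ‖a‖ ≠ 0 := norm_ne_zero_iff.mpr hc.1
      have hbn : ‖b‖ ≠ 0 := norm_ne_zero_iff.mpr hc.2
      rw [norm_mul, norm_div, norm_div, Complex.norm_real, Complex.norm_real,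
        Real.norm_of_nonneg (norm_nonneg b), Real.norm_of_nonneg (norm_nonneg a),
        div_self hbn, div_self han, one_mul]
  set l : ℂ := exp (log μ / 2) with hl
  have hl0 : l ≠ 0 := Complex.exp_ne_zero _
  have hlabs : ‖l‖ = 1 := by
    rw [hl, Complex.norm_exp]
    have hre2 : (log μ / 2).re = (log μ).re / 2 := by
      rw [show (2:ℂ) = ((2:ℝ):ℂ) by norm_num, Complex.div_ofReal_re]
    rw [hre2, Complex.log_re, hμabs, Real.log_one]
    simp
  have hl2 : l ^ 2 = μ := by
    rw [hl, sq, ← Complex.exp_add, add_halves]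
    exact Complex.exp_log hμ0
  have hconj : (starRingEnd ℂ) l = l⁻¹ := by
    have h1 : (starRingEnd ℂ) l * l = 1 := by
      rw [mul_comm, Complex.mul_conj, Complex.normSq_eq_norm_sq, hlabs]
      norm_num
    exact eq_inv_of_mul_eq_one_left h1
  set F : ℂ → ℂ := fun w => l * h w + (starRingEnd ℂ) l * g w with hF
  have hFdiff : DifferentiableOn ℂ F (ball 0 1) := by
    exact (hh.differentiableOn.const_mul l).add (hg.differentiableOn.const_mul _)
  have hF0 : F 0 = 0 := by simp [hF, hh0, hg0]
  have hFre : ∀ w ∈ ball (0 : ℂ) 1, |(F w).re| < 1 := by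
    intro w hw
    have hwn : ‖w‖ < 1 := mem_ball_zero_iff.mp hw
    have key : (F w).re = (l * (h w + (starRingEnd ℂ) (g w))).re := by
      have e1 : ((starRingEnd ℂ) l * g w).re = (l * (starRingEnd ℂ) (g w)).re := by
        rw [← Complex.conj_re (l * (starRingEnd ℂ) (g w))]
        simp [map_mul]
      simp only [hF, add_re, mul_add, e1]
    rw [key]
    calc |(l * (h w + (starRingEnd ℂ) (g w))).re| ≤ ‖l * (h w + (starRingEnd ℂ) (g w))‖ :=
          Complex.abs_re_le_norm _
      _ = ‖h w + (starRingEnd ℂ) (g w)‖ := by rw [norm_mul, hlabs, one_mul]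
      _ < 1 := hbound w hwn
  have hFz : ‖F z‖ = ‖a‖ + ‖b‖ := by
    have e1 : F z = l⁻¹ * (μ * a + b) := by
      rw [hF]
      simp only
      rw [hconj, ← hl2]
      field_simp
      ring
    rw [e1, norm_mul, norm_inv, hlabs, inv_one, one_mul]
    rw [hμ]
    split_ifs with hc
    · rcases hc with hc | hc
      · simp [hc]
      · simp [hc]
    · push_neg at hc
      have e2 : (b / (‖b‖ : ℂ)) * ((‖a‖ : ℂ) / a) * a + b = b * (((‖a‖ : ℂ) + (‖b‖ : ℂ)) / (‖b‖ : ℂ)) := by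
        have hb0 : (‖b‖ : ℂ) ≠ 0 := by simpa using norm_ne_zero_iff.mpr hc.2
        calc b / (‖b‖ : ℂ) * ((‖a‖ : ℂ) / a) * a + b
            = b / (‖b‖ : ℂ) * (‖a‖ : ℂ) + b := by rw [mul_assoc, div_mul_cancel₀ _ hc.1]
          _ = b * (((‖a‖ : ℂ) + (‖b‖ : ℂ)) / (‖b‖ : ℂ)) := by
              rw [add_div, div_self hb0, mul_add, mul_one]; ring
      rw [e2, norm_mul, norm_div]
      rw [show ((‖a‖ : ℂ) + (‖b‖ : ℂ)) = ((‖a‖ + ‖b‖ : ℝ) : ℂ) by push_cast; ring]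
      rw [Complex.norm_real, Complex.norm_real, Real.norm_of_nonneg (by positivity),
        Real.norm_of_nonneg (norm_nonneg b)]
      have hbpos : 0 < ‖b‖ := norm_pos_iff.mpr hc.2
      rw [mul_comm, div_mul_cancel₀ _ hbpos.ne']
  rw [← hFz]
  exact strip_bound F hFdiff hF0 hFre hz
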